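/- Let S = (P, T, F, λ, M) be a workflow system with sink place o, and let t ∈ T. Construct S' by adding a fresh place p', adding the arc (p', t), and taking initial marking M ⊎ [p']. Then t always occurs in S (i.e., every execution of S contains t) if and only if there exists no occurrence sequence of S' that leads to the marking [p', o]. -/
import Mathlib


/-- A Petri net (system) over places `P` and transitions `T`: for each transition its
preset (input places), postset (output places), and a label. -/
structure PetriNet (P T : Type) where
  pre : T → Finset P
  post : T → Finset P
  lab : T → String

/-- A transition is enabled at marking `M` iff every input place holds at least one token. -/
def Enabled {P T : Type} (N : PetriNet P T) (M : Multiset P) (t : T) : Prop :=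
  ∀ p ∈ N.pre t, p ∈ M

/-- Firing `t` consumes one token from each input place and produces one on each output place. -/
def fire {P T : Type} [DecidableEq P] (N : PetriNet P T) (M : Multiset P) (t : T) :
    Multiset P :=
  M - (N.pre t).val + (N.post t).val

/-- `OccSeq N M σ M'`: `σ` is an occurrence sequence of `N` leading from marking `M`
to marking `M'`. -/
inductive OccSeq {P T : Type} [DecidableEq P] (N : PetriNet P T) :
    Multiset P → List T → Multiset P → Prop
  | nil (M : Multiset P) : OccSeq N M [] M
  | cons {M M' : Multiset P} {t : T} {ts : List T} :
      Enabled N M t → OccSeq N (fire N M t) ts M' → OccSeq N M (t :: ts) M'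

/-- The net `S'` of Lemma 4.10: a fresh place `p' = none` is added as an extra input
place of transition `t` (arc `(p', t)`), all other arcs are kept. -/
def extendAlwaysOccurs {P T : Type} [DecidableEq P] [DecidableEq T]
    (N : PetriNet P T) (t : T) : PetriNet (Option P) T where
  pre := fun u =>
    if u = t then insert none ((N.pre u).image some) else (N.pre u).image some
  post := fun u => (N.post u).image some
  lab := N.lab


section Aux

variable {P T : Type} [DecidableEq P] [DecidableEq T] (N : PetriNet P T) (t : T)

lemma image_some_val (s : Finset P) : (s.image some).val = s.val.map some := by
  rw [Finset.image_val]
  exact Multiset.dedup_eq_self.mpr (s.nodup.map (Option.some_injective P))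

lemma count_none_map_some (A : Multiset P) : Multiset.count none (A.map some) = 0 := by
  simp [Multiset.count_eq_zero]

lemma count_some_map_some (A : Multiset P) (p : P) :
    Multiset.count (some p) (A.map some) = Multiset.count p A :=
  Multiset.count_map_eq_count' _ _ (Option.some_injective P) _

lemma fire_extend (A : Multiset P) {u : T} (hu : u ≠ t) :
    fire (extendAlwaysOccurs N t) (A.map some + {none}) u
      = (fire N A u).map some + {none} := by
  ext x
  simp only [fire, extendAlwaysOccurs, if_neg hu, image_some_val,
    Multiset.count_add, Multiset.count_sub]
  cases x with
  | none => simp [count_none_map_some]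
  | some p =>
      have h1 : Multiset.count (some p) ({none} : Multiset (Option P)) = 0 := by simp
      simp [count_some_map_some, h1]

lemma enabled_extend {A : Multiset P} {u : T} (hu : u ≠ t)
    (h : Enabled (extendAlwaysOccurs N t) (A.map some + {none}) u) :
    Enabled N A u := by
  intro p hp
  have : some p ∈ A.map some + {none} := by
    apply h
    simp [extendAlwaysOccurs, if_neg hu, hp]
  rcases Multiset.mem_add.mp this with h' | h'
  · exact (Multiset.mem_map_of_injective (Option.some_injective P)).mp h'
  · simp at h'

lemma enabled_extend' {A : Multiset P} {u : T} (hu : u ≠ t)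
    (h : Enabled N A u) :
    Enabled (extendAlwaysOccurs N t) (A.map some + {none}) u := by
  intro x hx
  simp only [extendAlwaysOccurs, if_neg hu, Finset.mem_image] at hx
  rcases hx with ⟨p, hp, rfl⟩
  exact Multiset.mem_add.mpr (Or.inl (Multiset.mem_map_of_injective (Option.some_injective P) |>.mpr (h p hp)))

lemma count_none_mono {X B : Multiset (Option P)} {σ : List T}
    (h : OccSeq (extendAlwaysOccurs N t) X σ B) :
    Multiset.count none B ≤ Multiset.count none X := by
  induction h with
  | nil => exact le_rfl
  | cons he _ ih =>
      refine ih.trans ?_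
      simp only [fire, Multiset.count_add, Multiset.count_sub]
      have hpost : ∀ v : T, Multiset.count none ((extendAlwaysOccurs N t).post v).val = 0 :=
        fun v => by simp [extendAlwaysOccurs, image_some_val, count_none_map_some]
      rw [hpost]
      simpa using Nat.sub_le _ _

lemma unlift {σ : List T} :
    ∀ (A : Multiset P) (B : Multiset (Option P)),
    OccSeq (extendAlwaysOccurs N t) (A.map some + {none}) σ B → none ∈ B →
    t ∉ σ ∧ ∃ C : Multiset P, B = C.map some + {none} ∧ OccSeq N A σ C := by
  induction σ with
  | nil =>
      intro A B h _
      cases h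
      exact ⟨by simp, A, rfl, OccSeq.nil A⟩
  | cons u ts ih =>
      intro A B h hB
      cases h with
      | cons he hrest =>
        by_cases hu : u = t
        · exfalso
          subst hu
          have hle := count_none_mono N u hrest
          have h0 : Multiset.count none
              (fire (extendAlwaysOccurs N u) (A.map some + {none}) u) = 0 := by
            simp only [fire, Multiset.count_add, Multiset.count_sub]
            have h1 : Multiset.count none ((extendAlwaysOccurs N u).post u).val = 0 := by
              simp [extendAlwaysOccurs, image_some_val, count_none_map_some]
            have h2 : 0 < Multiset.count none ((extendAlwaysOccurs N u).pre u).val :=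
              Multiset.count_pos.mpr (by simp [extendAlwaysOccurs])
            have h4 := count_none_map_some A
            have h5 : Multiset.count none ({none} : Multiset (Option P)) = 1 := by simp
            omega
          rw [h0] at hle
          have := Multiset.count_pos.mpr hB
          omega
        · rw [fire_extend N t A hu] at hrest
          obtain ⟨hts, C, hC, hocc⟩ := ih (fire N A u) B hrest hB
          exact ⟨by simp only [List.mem_cons, not_or]; exact ⟨fun e => hu e.symm, hts⟩, C, hC,
            OccSeq.cons (enabled_extend N t hu he) hocc⟩

lemma lift {σ : List T} :
    ∀ (A C : Multiset P), OccSeq N A σ C → t ∉ σ →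
    OccSeq (extendAlwaysOccurs N t) (A.map some + {none}) σ (C.map some + {none}) := by
  induction σ with
  | nil =>
      intro A C h _
      cases h
      exact OccSeq.nil _
  | cons u ts ih =>
      intro A C h ht
      have hu : u ≠ t := fun e => ht (by simp [e])
      have hts : t ∉ ts := fun e => ht (by simp [e])
      cases h with
      | cons he hrest =>
        refine OccSeq.cons (enabled_extend' N t hu he) ?_
        rw [fire_extend N t A hu]
        exact ih _ _ hrest hts

lemma target_eq (o : P) :
    ({none, some o} : Multiset (Option P)) = ({o} : Multiset P).map some + {none} := by
  simp only [Multiset.map_singleton, Multiset.singleton_add]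
  exact (Multiset.cons_swap _ _ _)

end Aux

/-- Lemma 4.10: `t` always occurs in the workflow system `S` (with initial marking `M`
and sink `o`) iff no occurrence sequence of `S'` (with initial marking `M ⊎ [p']`)
leads to the marking `[p', o]`. -/
theorem alwaysOccurs_transition_iff_no_reachability {P T : Type} [DecidableEq P]
    [DecidableEq T] (N : PetriNet P T) (M : Multiset P) (o : P) (t : T) :
    (∀ σ : List T, OccSeq N M σ {o} → t ∈ σ) ↔
    ¬ ∃ σ : List T,
        OccSeq (extendAlwaysOccurs N t) (M.map some + {none}) σ
          ({none, some o} : Multiset (Option P)) := by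
  constructor
  · intro h hex
    rcases hex with ⟨σ, hσ⟩
    rw [target_eq] at hσ
    obtain ⟨htσ, C, hC, hocc⟩ := unlift N t M _ hσ (by simp)
    have hCo : C = {o} := by
      have := add_right_cancel hC
      exact Multiset.map_injective (Option.some_injective P) this.symm
    subst hCo
    exact htσ (h σ hocc)
  · intro h σ hσ
    by_contra ht
    exact h ⟨σ, by rw [target_eq]; exact lift N t M {o} hσ ht⟩
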